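/- Perturbation bound for the discrete Lyapunov equation: let A ∈ ℝ^{n×n} have spectral radius ρ(A) < 1 and let Σ(A) be the unique positive definite solution of Σ(A) = I_n + AΣ(A)Aᵀ. If A' ∈ ℝ^{n×n} satisfies ‖A' − A‖ ≤ 1/(4‖Σ(A)‖(1 + ‖A‖)), then ρ(A') < 1 and ‖Σ(A') − Σ(A)‖ ≤ 4‖Σ(A)‖²(1 + ‖A‖)‖A' − A‖, where Σ(A') is the unique positive definite solution of Σ(A') = I_n + A'Σ(A')A'ᵀ. -/

import Mathlib

open Matrix

noncomputable def spNorm {α β : Type*} [Fintype α] [Fintype β] [DecidableEq β]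
    (M : Matrix α β ℝ) : ℝ :=
  ‖LinearMap.toContinuousLinearMap (Matrix.toEuclideanLin M)‖

noncomputable def sigMin {α β : Type*} [Fintype α] [Fintype β] [DecidableEq β]
    (M : Matrix α β ℝ) : ℝ :=
  sInf ((fun x : EuclideanSpace ℝ β =>
    ‖LinearMap.toContinuousLinearMap (Matrix.toEuclideanLin M) x‖) '' {x | ‖x‖ = 1})

noncomputable def frobNorm {α β : Type*} [Fintype α] [Fintype β] (M : Matrix α β ℝ) : ℝ :=
  Real.sqrt (∑ i, ∑ j, (M i j) ^ 2)

noncomputable def frobInner {α β : Type*} [Fintype α] [Fintype β] (X Y : Matrix α β ℝ) : ℝ :=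
  (Xᵀ * Y).trace

noncomputable def vecNorm {α : Type*} [Fintype α] (v : α → ℝ) : ℝ :=
  Real.sqrt (∑ i, (v i) ^ 2)

/-- spectral radius strictly less than one (Schur stability). -/
def IsStable {n : ℕ} (M : Matrix (Fin n) (Fin n) ℝ) : Prop :=
  ∀ μ ∈ spectrum ℂ (M.map (algebraMap ℝ ℂ)), ‖μ‖ < 1

def Controllable {n m : ℕ} (A : Matrix (Fin n) (Fin n) ℝ) (B : Matrix (Fin n) (Fin m) ℝ) :
    Prop :=
  Function.Surjective fun v : Fin n × Fin m → ℝ =>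
    Matrix.mulVec (Matrix.of fun i p => (A ^ (p.1 : ℕ) * B) i p.2) v

noncomputable def dlyap {n : ℕ} (M : Matrix (Fin n) (Fin n) ℝ) :
    Matrix (Fin n) (Fin n) ℝ :=
  ∑' i : ℕ, M ^ i * (M ^ i)ᵀ

noncomputable def dlyapQ {n : ℕ} (M Qc : Matrix (Fin n) (Fin n) ℝ) :
    Matrix (Fin n) (Fin n) ℝ :=
  ∑' i : ℕ, (M ^ i)ᵀ * Qc * M ^ i

noncomputable def SigmaK {n m : ℕ} (A : Matrix (Fin n) (Fin n) ℝ)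
    (B : Matrix (Fin n) (Fin m) ℝ) (K : Matrix (Fin m) (Fin n) ℝ) :
    Matrix (Fin n) (Fin n) ℝ :=
  dlyap (A + B * K)

noncomputable def PmatK {n m : ℕ} (A : Matrix (Fin n) (Fin n) ℝ)
    (B : Matrix (Fin n) (Fin m) ℝ) (Q : Matrix (Fin n) (Fin n) ℝ)
    (R : Matrix (Fin m) (Fin m) ℝ) (K : Matrix (Fin m) (Fin n) ℝ) :
    Matrix (Fin n) (Fin n) ℝ :=
  dlyapQ (A + B * K) (Q + Kᵀ * R * K)

noncomputable def costC {n m : ℕ} (A : Matrix (Fin n) (Fin n) ℝ)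
    (B : Matrix (Fin n) (Fin m) ℝ) (Q : Matrix (Fin n) (Fin n) ℝ)
    (R : Matrix (Fin m) (Fin m) ℝ) (K : Matrix (Fin m) (Fin n) ℝ) : ℝ :=
  ((Q + Kᵀ * R * K) * SigmaK A B K).trace

noncomputable def gradC {n m : ℕ} (A : Matrix (Fin n) (Fin n) ℝ)
    (B : Matrix (Fin n) (Fin m) ℝ) (Q : Matrix (Fin n) (Fin n) ℝ)
    (R : Matrix (Fin m) (Fin m) ℝ) (K : Matrix (Fin m) (Fin n) ℝ) :
    Matrix (Fin m) (Fin n) ℝ :=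
  (2 : ℝ) • (((R + Bᵀ * PmatK A B Q R K * B) * K + Bᵀ * PmatK A B Q R K * A) * SigmaK A B K)

def StronglyStable {n m : ℕ} (A : Matrix (Fin n) (Fin n) ℝ) (B : Matrix (Fin n) (Fin m) ℝ)
    (K : Matrix (Fin m) (Fin n) ℝ) (κ α : ℝ) : Prop :=
  1 ≤ κ ∧ 0 < α ∧ α ≤ 1 ∧
    ∃ H L : Matrix (Fin n) (Fin n) ℝ, H.PosDef ∧
      A + B * K = H * L * H⁻¹ ∧ spNorm L ≤ 1 - α ∧ spNorm H * spNorm H⁻¹ ≤ κ ∧ spNorm K ≤ κ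

def SeqStable {n m : ℕ} (A : Matrix (Fin n) (Fin n) ℝ) (B : Matrix (Fin n) (Fin m) ℝ)
    (K : ℕ → Matrix (Fin m) (Fin n) ℝ) (t0 : ℕ) (κ α : ℝ) : Prop :=
  1 ≤ κ ∧ 0 < α ∧ α ≤ 1 ∧
    ∃ H L : ℕ → Matrix (Fin n) (Fin n) ℝ,
      ∀ t, t0 ≤ t → (H t).PosDef ∧ A + B * K t = H t * L t * (H t)⁻¹ ∧
        spNorm (L t) ≤ 1 - α ∧ spNorm (K t) ≤ κ ∧ spNorm (H t) ≤ κ ∧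
        spNorm (H t)⁻¹ ≤ 1 ∧ spNorm ((H (t + 1))⁻¹ * H t) ≤ 1 + α / 2

noncomputable def D0mat {n m : ℕ} (u : ℕ → Fin m → ℝ) (x : ℕ → Fin n → ℝ) (t : ℕ) :
    Matrix (Fin m ⊕ Fin n) (Fin t) ℝ :=
  Matrix.of fun i j => Sum.elim (fun a => u (j : ℕ) a) (fun b => x (j : ℕ) b) i

noncomputable def X1mat {n : ℕ} (x : ℕ → Fin n → ℝ) (t : ℕ) : Matrix (Fin n) (Fin t) ℝ :=
  Matrix.of fun i j => x ((j : ℕ) + 1) i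

noncomputable def W0mat {n : ℕ} (w : ℕ → Fin n → ℝ) (t : ℕ) : Matrix (Fin n) (Fin t) ℝ :=
  Matrix.of fun i j => w (j : ℕ) i

noncomputable def Phimat {n m : ℕ} (u : ℕ → Fin m → ℝ) (x : ℕ → Fin n → ℝ) (t : ℕ) :
    Matrix (Fin m ⊕ Fin n) (Fin m ⊕ Fin n) ℝ :=
  ((t : ℝ)⁻¹) • (D0mat u x t * (D0mat u x t)ᵀ)

noncomputable def BAhat {n m : ℕ} (u : ℕ → Fin m → ℝ) (x : ℕ → Fin n → ℝ) (t : ℕ) :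
    Matrix (Fin n) (Fin m ⊕ Fin n) ℝ :=
  X1mat x t * (D0mat u x t)ᵀ * (D0mat u x t * (D0mat u x t)ᵀ)⁻¹

noncomputable def Bhat {n m : ℕ} (u : ℕ → Fin m → ℝ) (x : ℕ → Fin n → ℝ) (t : ℕ) :
    Matrix (Fin n) (Fin m) ℝ :=
  Matrix.of fun i j => BAhat u x t i (Sum.inl j)

noncomputable def Ahat {n m : ℕ} (u : ℕ → Fin m → ℝ) (x : ℕ → Fin n → ℝ) (t : ℕ) :
    Matrix (Fin n) (Fin n) ℝ :=
  Matrix.of fun i j => BAhat u x t i (Sum.inr j)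

noncomputable def deltaT {n m : ℕ} (w : ℕ → Fin n → ℝ) (u : ℕ → Fin m → ℝ)
    (x : ℕ → Fin n → ℝ) (t : ℕ) : ℝ :=
  (t : ℝ)⁻¹ * spNorm (W0mat w t * (D0mat u x t)ᵀ)

noncomputable def SNR {n m : ℕ} (γ : ℕ → ℝ) (w : ℕ → Fin n → ℝ) (u : ℕ → Fin m → ℝ)
    (x : ℕ → Fin n → ℝ) (t : ℕ) : ℝ :=
  γ t / deltaT w u x t


open scoped Matrix.Norms.L2Operator

section DlyapPerturbAux

open scoped Matrix.Norms.L2Operator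

variable {n : ℕ}

lemma spNorm_eq_norm (M : Matrix (Fin n) (Fin n) ℝ) : spNorm M = ‖M‖ := rfl

noncomputable def vn (x : Fin n → ℝ) : ℝ := Real.sqrt (∑ i, x i ^ 2)
noncomputable def quad (M : Matrix (Fin n) (Fin n) ℝ) (x : Fin n → ℝ) : ℝ := x ⬝ᵥ (M *ᵥ x)

lemma vn_nonneg (x : Fin n → ℝ) : 0 ≤ vn x := Real.sqrt_nonneg _
lemma vn_sq (x : Fin n → ℝ) : vn x ^ 2 = ∑ i, x i ^ 2 := Real.sq_sqrt (by positivity)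

lemma vn_mulVec_le (M : Matrix (Fin n) (Fin n) ℝ) (x : Fin n → ℝ) :
    vn (M *ᵥ x) ≤ ‖M‖ * vn x := by
  have h := M.l2_opNorm_mulVec ((EuclideanSpace.equiv (Fin n) ℝ).symm x)
  have e : ∀ y : EuclideanSpace ℝ (Fin n), ‖y‖ = vn (fun i => y i) := by
    intro y; rw [EuclideanSpace.norm_eq, vn]; simp [sq_abs]
  rw [e, e] at h
  convert h using 3 <;> rfl

lemma norm_le_of_vn (M : Matrix (Fin n) (Fin n) ℝ) (c : ℝ) (hc : 0 ≤ c)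
    (h : ∀ x, vn (M *ᵥ x) ≤ c * vn x) : ‖M‖ ≤ c := by
  rw [Matrix.l2_opNorm_def]
  refine ContinuousLinearMap.opNorm_le_bound _ hc fun y => ?_
  have hy := h (fun i => y i)
  have e : ∀ y : EuclideanSpace ℝ (Fin n), ‖y‖ = vn (fun i => y i) := by
    intro y; rw [EuclideanSpace.norm_eq, vn]; simp [sq_abs]
  rw [e y]
  refine le_trans (le_of_eq ?_) hy
  rw [e]
  rfl

lemma vn_smul (r : ℝ) (x : Fin n → ℝ) : vn (r • x) = |r| * vn x := by
  rw [vn, vn, ← Real.sqrt_sq_eq_abs, ← Real.sqrt_mul (sq_nonneg r)]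
  congr 1
  rw [Finset.mul_sum]
  apply Finset.sum_congr rfl
  intro i _
  simp [mul_pow]

lemma vn_eq_zero {x : Fin n → ℝ} (h : vn x = 0) : x = 0 := by
  have h2 : ∑ i, x i ^ 2 = 0 := by
    have := vn_sq x
    rw [h] at this
    simpa using this.symm
  funext i
  have := Finset.sum_eq_zero_iff_of_nonneg (fun i _ => sq_nonneg (x i)) |>.mp h2 i (by simp)
  simpa using pow_eq_zero_iff (n := 2) (by norm_num) |>.mp this

lemma abs_dot_le (x y : Fin n → ℝ) : |x ⬝ᵥ y| ≤ vn x * vn y := by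
  have h := abs_real_inner_le_norm ((EuclideanSpace.equiv (Fin n) ℝ).symm x)
    ((EuclideanSpace.equiv (Fin n) ℝ).symm y)
  have e : ∀ y : EuclideanSpace ℝ (Fin n), ‖y‖ = vn (fun i => y i) := by
    intro y; rw [EuclideanSpace.norm_eq, vn]; simp [sq_abs]
  rw [e, e] at h
  have h2 : (inner ℝ ((EuclideanSpace.equiv (Fin n) ℝ).symm x)
      ((EuclideanSpace.equiv (Fin n) ℝ).symm y) : ℝ) = x ⬝ᵥ y := by
    rw [PiLp.inner_apply]; simp [dotProduct]
    exact Finset.sum_congr rfl fun i _ => mul_comm _ _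
  rw [h2] at h
  exact h

lemma abs_quad_le (M : Matrix (Fin n) (Fin n) ℝ) (x : Fin n → ℝ) :
    |quad M x| ≤ ‖M‖ * vn x ^ 2 := by
  refine (abs_dot_le x (M *ᵥ x)).trans ?_
  calc vn x * vn (M *ᵥ x) ≤ vn x * (‖M‖ * vn x) :=
        mul_le_mul_of_nonneg_left (vn_mulVec_le M x) (vn_nonneg x)
    _ = ‖M‖ * vn x ^ 2 := by ring

lemma quad_add (X Y : Matrix (Fin n) (Fin n) ℝ) (x : Fin n → ℝ) :
    quad (X + Y) x = quad X x + quad Y x := by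
  simp [quad, Matrix.add_mulVec, dotProduct_add]

lemma conjTranspose_eq_transpose' (M : Matrix (Fin n) (Fin n) ℝ) : Mᴴ = Mᵀ := by
  ext i j; simp [Matrix.conjTranspose]

lemma normT_dlyapAux (M : Matrix (Fin n) (Fin n) ℝ) : ‖Mᵀ‖ = ‖M‖ := by
  rw [← conjTranspose_eq_transpose']; exact M.l2_opNorm_conjTranspose

lemma quad_mul_transpose (L M : Matrix (Fin n) (Fin n) ℝ) (x : Fin n → ℝ) :
    quad (L * M * Lᵀ) x = quad M (Lᵀ *ᵥ x) := by
  unfold quad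
  rw [← Matrix.mulVec_mulVec, ← Matrix.mulVec_mulVec, Matrix.dotProduct_mulVec x L,
    ← Matrix.mulVec_transpose, Matrix.dotProduct_mulVec]

lemma quad_one (x : Fin n → ℝ) : quad 1 x = vn x ^ 2 := by
  unfold quad
  rw [Matrix.one_mulVec, vn, Real.sq_sqrt (by positivity)]
  simp [dotProduct, pow_two]

noncomputable def quadL (x : Fin n → ℝ) : Matrix (Fin n) (Fin n) ℝ →L[ℝ] ℝ :=
  LinearMap.toContinuousLinearMap
    { toFun := fun M => x ⬝ᵥ (M *ᵥ x)
      map_add' := by intro M N; simp [Matrix.add_mulVec, dotProduct_add]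
      map_smul' := by intro r M; simp [Matrix.smul_mulVec, dotProduct_smul] }

lemma quadL_apply (x : Fin n → ℝ) (M : Matrix (Fin n) (Fin n) ℝ) : quadL x M = quad M x := rfl

noncomputable def transL : Matrix (Fin n) (Fin n) ℝ →L[ℝ] Matrix (Fin n) (Fin n) ℝ :=
  LinearMap.toContinuousLinearMap
    { toFun := fun M => Mᵀ
      map_add' := by intro M N; simp [Matrix.transpose_add]
      map_smul' := by intro r M; simp [Matrix.transpose_smul] }

lemma transL_apply (M : Matrix (Fin n) (Fin n) ℝ) : transL M = Mᵀ := rfl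

noncomputable def sandL (M : Matrix (Fin n) (Fin n) ℝ) :
    Matrix (Fin n) (Fin n) ℝ →L[ℝ] Matrix (Fin n) (Fin n) ℝ :=
  LinearMap.toContinuousLinearMap
    { toFun := fun X => M * X * Mᵀ
      map_add' := by intro X Y; noncomm_ring
      map_smul' := by intro r X; simp [Matrix.mul_smul, Matrix.smul_mul] }

noncomputable def lySol (M Q : Matrix (Fin n) (Fin n) ℝ) : Matrix (Fin n) (Fin n) ℝ :=
  ∑' k : ℕ, M ^ k * Q * (M ^ k)ᵀ

lemma norm_term_le {M : Matrix (Fin n) (Fin n) ℝ} {C r : ℝ}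
    (hd : ∀ k, ‖M ^ k‖ ^ 2 ≤ C * r ^ k) (Q : Matrix (Fin n) (Fin n) ℝ) (k : ℕ) :
    ‖M ^ k * Q * (M ^ k)ᵀ‖ ≤ ‖Q‖ * (C * r ^ k) := by
  calc ‖M ^ k * Q * (M ^ k)ᵀ‖ ≤ ‖M ^ k * Q‖ * ‖(M ^ k)ᵀ‖ := norm_mul_le _ _
    _ ≤ ‖M ^ k‖ * ‖Q‖ * ‖(M ^ k)ᵀ‖ :=
        mul_le_mul_of_nonneg_right (norm_mul_le _ _) (norm_nonneg _)
    _ = ‖Q‖ * ‖M ^ k‖ ^ 2 := by rw [normT_dlyapAux]; ring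
    _ ≤ ‖Q‖ * (C * r ^ k) := mul_le_mul_of_nonneg_left (hd k) (norm_nonneg _)

lemma summable_lySol {M : Matrix (Fin n) (Fin n) ℝ} {C r : ℝ} (hr0 : 0 ≤ r) (hr1 : r < 1)
    (hd : ∀ k, ‖M ^ k‖ ^ 2 ≤ C * r ^ k) (Q : Matrix (Fin n) (Fin n) ℝ) :
    Summable (fun k : ℕ => M ^ k * Q * (M ^ k)ᵀ) := by
  refine Summable.of_norm_bounded ?_ (norm_term_le hd Q)
  exact ((summable_geometric_of_lt_one hr0 hr1).mul_left C).mul_left ‖Q‖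

lemma lySol_fix {M : Matrix (Fin n) (Fin n) ℝ} {C r : ℝ} (hr0 : 0 ≤ r) (hr1 : r < 1)
    (hd : ∀ k, ‖M ^ k‖ ^ 2 ≤ C * r ^ k) (Q : Matrix (Fin n) (Fin n) ℝ) :
    lySol M Q = Q + M * lySol M Q * Mᵀ := by
  have hs := summable_lySol hr0 hr1 hd Q
  have h0 : lySol M Q = (M ^ 0 * Q * (M ^ 0)ᵀ) +
      ∑' k : ℕ, M ^ (k + 1) * Q * (M ^ (k + 1))ᵀ := hs.tsum_eq_zero_add
  have hL : sandL M (lySol M Q) = ∑' k : ℕ, M * (M ^ k * Q * (M ^ k)ᵀ) * Mᵀ := by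
    rw [lySol, ContinuousLinearMap.map_tsum _ hs]
    rfl
  have hterm : ∀ k : ℕ, M ^ (k + 1) * Q * (M ^ (k + 1))ᵀ = M * (M ^ k * Q * (M ^ k)ᵀ) * Mᵀ := by
    intro k
    rw [pow_succ', Matrix.transpose_mul]
    noncomm_ring
  have hL' : M * lySol M Q * Mᵀ = sandL M (lySol M Q) := rfl
  have key : M * lySol M Q * Mᵀ = ∑' k : ℕ, M ^ (k + 1) * Q * (M ^ (k + 1))ᵀ := by
    rw [tsum_congr hterm, hL', hL]
  rw [key, h0]
  simp only [pow_zero, Matrix.transpose_one, one_mul, mul_one]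

lemma lySol_unique {M : Matrix (Fin n) (Fin n) ℝ} {C r : ℝ} (hr0 : 0 ≤ r) (hr1 : r < 1)
    (hd : ∀ k, ‖M ^ k‖ ^ 2 ≤ C * r ^ k) (Q X Y : Matrix (Fin n) (Fin n) ℝ)
    (hX : X = Q + M * X * Mᵀ) (hY : Y = Q + M * Y * Mᵀ) : X = Y := by
  set D := X - Y with hD
  have hfix : ∀ k : ℕ, D = M ^ k * D * (M ^ k)ᵀ := by
    intro k
    induction k with
    | zero => simp
    | succ k ih =>
      have h1 : D = M * D * Mᵀ := by
        rw [hD]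
        nth_rewrite 1 [hX, hY]
        noncomm_ring
      calc D = M ^ k * D * (M ^ k)ᵀ := ih
        _ = M ^ k * (M * D * Mᵀ) * (M ^ k)ᵀ := by rw [← h1]
        _ = M ^ (k + 1) * D * (M ^ (k + 1))ᵀ := by
            rw [pow_succ, Matrix.transpose_mul]; noncomm_ring
  have hbound : ∀ k : ℕ, ‖D‖ ≤ ‖D‖ * (C * r ^ k) := by
    intro k
    calc ‖D‖ = ‖M ^ k * D * (M ^ k)ᵀ‖ := by rw [← hfix k]
      _ ≤ ‖D‖ * (C * r ^ k) := norm_term_le hd D k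
  by_contra hne
  have hDpos : 0 < ‖D‖ := by
    rw [norm_pos_iff]
    intro h0
    exact hne (sub_eq_zero.mp h0)
  have hC : 0 < C := by
    have := hbound 0
    simp only [pow_zero, mul_one] at this
    nlinarith
  obtain ⟨k, hk⟩ := exists_pow_lt_of_lt_one (show (0:ℝ) < 1 / C by positivity) hr1
  have hb := hbound k
  have h2 : C * r ^ k < 1 := by
    rw [lt_div_iff₀ hC] at hk
    linarith [hk]
  nlinarith [hb, h2, hDpos]

lemma norm_le_of_quad_symm (G : Matrix (Fin n) (Fin n) ℝ) (hsym : Gᵀ = G) (c : ℝ) (hc : 0 ≤ c)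
    (h : ∀ x, |quad G x| ≤ c * vn x ^ 2) : ‖G‖ ≤ c := by
  have hunit : ∀ y, vn y = 1 → vn (G *ᵥ y) ≤ c := by
    intro y hy
    rcases eq_or_ne (vn (G *ᵥ y)) 0 with h0 | h0
    · rw [h0]; exact hc
    set z := G *ᵥ y with hz
    have ht : 0 < vn z := lt_of_le_of_ne (vn_nonneg z) (Ne.symm h0)
    set t := vn z with htdef
    set u := t⁻¹ • z with hu
    have hvnu : vn u = 1 := by
      rw [hu, vn_smul, abs_inv, abs_of_pos ht]
      field_simp
      rfl
    have hudotz : u ⬝ᵥ z = t := by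
      rw [hu, smul_dotProduct]
      have : z ⬝ᵥ z = t ^ 2 := by rw [htdef, vn_sq]; simp [dotProduct, pow_two]
      rw [smul_eq_mul, this]
      field_simp
    have hyGu : y ⬝ᵥ (G *ᵥ u) = u ⬝ᵥ z := by
      rw [Matrix.dotProduct_mulVec, ← Matrix.mulVec_transpose, hsym, ← hz, dotProduct_comm]
    have e1 : quad G (u + y) = quad G u + u ⬝ᵥ z + u ⬝ᵥ z + quad G y := by
      simp only [quad, Matrix.mulVec_add, dotProduct_add, add_dotProduct]
      rw [hyGu, ← hz]
      ring
    have e2 : quad G (u - y) = quad G u - u ⬝ᵥ z - u ⬝ᵥ z + quad G y := by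
      simp only [quad, Matrix.mulVec_sub, dotProduct_sub, sub_dotProduct]
      rw [hyGu, ← hz]
      ring
    have hpar : vn (u + y) ^ 2 + vn (u - y) ^ 2 = 2 * vn u ^ 2 + 2 * vn y ^ 2 := by
      simp only [vn_sq]
      rw [← Finset.sum_add_distrib, Finset.mul_sum, Finset.mul_sum, ← Finset.sum_add_distrib]
      apply Finset.sum_congr rfl
      intro i _
      simp only [Pi.add_apply, Pi.sub_apply]
      ring
    have h1 := h (u + y)
    have h2 := h (u - y)
    have h4 : 4 * t ≤ 4 * c := by
      have e4 : 4 * t = quad G (u + y) - quad G (u - y) := by rw [e1, e2, hudotz]; ring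
      have hb : quad G (u + y) - quad G (u - y) ≤ c * vn (u+y)^2 + c * vn (u-y)^2 := by
        have ha := abs_le.mp h1
        have hb2 := abs_le.mp h2
        linarith [ha.2, hb2.1]
      rw [e4]
      calc quad G (u + y) - quad G (u - y) ≤ c * vn (u+y)^2 + c * vn (u-y)^2 := hb
        _ = c * (vn (u+y)^2 + vn (u-y)^2) := by ring
        _ = c * (2 * vn u ^2 + 2 * vn y ^2) := by rw [hpar]
        _ = 4 * c := by rw [hvnu, hy]; ring
    linarith
  apply norm_le_of_vn G c hc
  intro y
  rcases eq_or_ne (vn y) 0 with h0 | h0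
  · have hy0 : y = 0 := vn_eq_zero h0
    rw [hy0]
    simp [vn, Matrix.mulVec_zero]
  · have hα : 0 < vn y := lt_of_le_of_ne (vn_nonneg y) (Ne.symm h0)
    have hyhat : vn ((vn y)⁻¹ • y) = 1 := by
      rw [vn_smul, abs_inv, abs_of_pos hα]
      field_simp
    have hu := hunit _ hyhat
    rw [Matrix.mulVec_smul, vn_smul, abs_inv, abs_of_pos hα] at hu
    calc vn (G *ᵥ y) = vn y * ((vn y)⁻¹ * vn (G *ᵥ y)) := by field_simp
      _ ≤ vn y * c := mul_le_mul_of_nonneg_left hu (le_of_lt hα)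
      _ = c * vn y := by ring

lemma sum_sq_mulVec_le (M : Matrix (Fin n) (Fin n) ℝ) (x : Fin n → ℝ) :
    ∑ i, ((M *ᵥ x) i) ^ 2 ≤ ‖M‖ ^ 2 * ∑ i, x i ^ 2 := by
  have h := vn_mulVec_le M x
  have h2 := mul_self_le_mul_self (vn_nonneg _) h
  have e1 : vn (M *ᵥ x) * vn (M *ᵥ x) = ∑ i, ((M *ᵥ x) i) ^ 2 := by
    rw [← pow_two, vn, Real.sq_sqrt (by positivity)]
  have e2 : ‖M‖ * vn x * (‖M‖ * vn x) = ‖M‖ ^ 2 * ∑ i, x i ^ 2 := by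
    have : vn x * vn x = ∑ i, x i ^ 2 := by rw [← pow_two, vn, Real.sq_sqrt (by positivity)]
    nlinarith [this]
  rw [e1, e2] at h2
  exact h2

lemma mulVec_map_re (M : Matrix (Fin n) (Fin n) ℝ) (v : Fin n → ℂ) (i : Fin n) :
    ((M.map (algebraMap ℝ ℂ) *ᵥ v) i).re = (M *ᵥ fun j => (v j).re) i := by
  simp [Matrix.mulVec, dotProduct, Complex.re_sum, Matrix.map_apply, Complex.mul_re]

lemma mulVec_map_im (M : Matrix (Fin n) (Fin n) ℝ) (v : Fin n → ℂ) (i : Fin n) :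
    ((M.map (algebraMap ℝ ℂ) *ᵥ v) i).im = (M *ᵥ fun j => (v j).im) i := by
  simp [Matrix.mulVec, dotProduct, Complex.im_sum, Matrix.map_apply, Complex.mul_im]

lemma norm_sq_complex (z : ℂ) : ‖z‖ ^ 2 = z.re ^ 2 + z.im ^ 2 := by
  rw [Complex.sq_norm, Complex.normSq_apply]
  ring

lemma sum_normSq_mulVec_le (M : Matrix (Fin n) (Fin n) ℝ) (v : Fin n → ℂ) :
    ∑ i, ‖(M.map (algebraMap ℝ ℂ) *ᵥ v) i‖ ^ 2 ≤ ‖M‖ ^ 2 * ∑ i, ‖v i‖ ^ 2 := by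
  have e : ∑ i, ‖(M.map (algebraMap ℝ ℂ) *ᵥ v) i‖ ^ 2
      = (∑ i, ((M *ᵥ fun j => (v j).re) i) ^ 2) + ∑ i, ((M *ᵥ fun j => (v j).im) i) ^ 2 := by
    rw [← Finset.sum_add_distrib]
    apply Finset.sum_congr rfl
    intro i _
    rw [norm_sq_complex, mulVec_map_re, mulVec_map_im]
  have e2 : ‖M‖ ^ 2 * ∑ i, ‖v i‖ ^ 2
      = ‖M‖ ^ 2 * (∑ i, (v i).re ^ 2) + ‖M‖ ^ 2 * ∑ i, (v i).im ^ 2 := by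
    rw [← mul_add, ← Finset.sum_add_distrib]
    congr 1
    apply Finset.sum_congr rfl
    intro i _
    rw [norm_sq_complex]
  rw [e, e2]
  exact add_le_add (sum_sq_mulVec_le M _) (sum_sq_mulVec_le M _)

lemma isStable_of_decay (M : Matrix (Fin n) (Fin n) ℝ) {C r : ℝ} (hr1 : r < 1) (hC : 0 < C)
    (hd : ∀ k, ‖M ^ k‖ ^ 2 ≤ C * r ^ k) : IsStable M := by
  intro μ hμ
  by_contra hge
  push_neg at hge
  rw [spectrum.mem_iff] at hμ
  set a := M.map (algebraMap ℝ ℂ) with ha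
  have hdet : (algebraMap ℂ (Matrix (Fin n) (Fin n) ℂ) μ - a).det = 0 := by
    by_contra hne
    exact hμ ((Matrix.isUnit_iff_isUnit_det _).mpr (isUnit_iff_ne_zero.mpr hne))
  obtain ⟨v, hv0, hveq⟩ := Matrix.exists_mulVec_eq_zero_iff.mpr hdet
  have heig : a *ᵥ v = μ • v := by
    have h1 : algebraMap ℂ (Matrix (Fin n) (Fin n) ℂ) μ = μ • (1 : Matrix (Fin n) (Fin n) ℂ) :=
      Algebra.algebraMap_eq_smul_one μ
    have h2 := hveq
    rw [Matrix.sub_mulVec, h1, Matrix.smul_mulVec, Matrix.one_mulVec, sub_eq_zero] at h2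
    exact h2.symm
  have hpow : ∀ k : ℕ, (a ^ k) *ᵥ v = (μ ^ k) • v := by
    intro k
    induction k with
    | zero => simp
    | succ k ih =>
      rw [pow_succ', ← Matrix.mulVec_mulVec, ih, Matrix.mulVec_smul, heig, smul_smul, pow_succ']
      rw [mul_comm]
  set V := ∑ i, ‖v i‖ ^ 2 with hV
  have hVpos : 0 < V := by
    have hex : ∃ i, v i ≠ 0 := by
      by_contra hall
      push_neg at hall
      exact hv0 (funext hall)
    obtain ⟨i, hi⟩ := hex
    apply Finset.sum_pos' (fun j _ => by positivity)
    refine ⟨i, by simp, ?_⟩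
    have : 0 < ‖v i‖ := norm_pos_iff.mpr hi
    positivity
  have hkey : ∀ k : ℕ, ‖μ‖ ^ (2 * k) * V ≤ C * r ^ k * V := by
    intro k
    have hmk : a ^ k = (M ^ k).map (algebraMap ℝ ℂ) := by
      rw [ha, ← RingHom.mapMatrix_apply, ← RingHom.mapMatrix_apply, map_pow]
    have h1 : ∑ i, ‖((a ^ k) *ᵥ v) i‖ ^ 2 ≤ ‖M ^ k‖ ^ 2 * V := by
      rw [hmk]
      exact sum_normSq_mulVec_le (M ^ k) v
    have h2 : ∑ i, ‖((a ^ k) *ᵥ v) i‖ ^ 2 = ‖μ‖ ^ (2 * k) * V := by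
      rw [hpow k, hV, Finset.mul_sum]
      apply Finset.sum_congr rfl
      intro i _
      rw [Pi.smul_apply, smul_eq_mul, norm_mul, norm_pow, mul_pow, ← pow_mul, mul_comm k 2]
    rw [h2] at h1
    refine h1.trans ?_
    exact mul_le_mul_of_nonneg_right (hd k) (le_of_lt hVpos)
  obtain ⟨k, hk⟩ := exists_pow_lt_of_lt_one (show (0:ℝ) < 1 / C by positivity) hr1
  have h3 := hkey k
  have h4 : (1:ℝ) ≤ ‖μ‖ ^ (2 * k) := one_le_pow₀ hge
  have h5 : C * r ^ k < 1 := by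
    rw [lt_div_iff₀ hC] at hk
    linarith
  nlinarith

lemma real_norm_le_complex (M : Matrix (Fin n) (Fin n) ℝ) :
    ‖M‖ ≤ ‖M.map (algebraMap ℝ ℂ)‖ := by
  set Mc := M.map (algebraMap ℝ ℂ) with hMc
  apply norm_le_of_vn M ‖Mc‖ (norm_nonneg _)
  intro x
  set z : Fin n → ℂ := fun i => (x i : ℂ) with hzdef
  have h := Mc.l2_opNorm_mulVec ((EuclideanSpace.equiv (Fin n) ℂ).symm z)
  have enormC : ∀ w : Fin n → ℂ,
      ‖((EuclideanSpace.equiv (Fin n) ℂ).symm w : EuclideanSpace ℂ (Fin n))‖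
        = Real.sqrt (∑ i, ‖w i‖ ^ 2) := by
    intro w
    rw [EuclideanSpace.norm_eq]
    congr 1
  have hz : Mc *ᵥ ((EuclideanSpace.equiv (Fin n) ℂ).symm z) = fun i => ((M *ᵥ x) i : ℂ) := by
    funext i
    show (Mc *ᵥ z) i = _
    simp only [Matrix.mulVec, dotProduct, hMc, Matrix.map_apply, hzdef]
    push_cast
    rfl
  rw [hz] at h
  rw [enormC] at h
  have e1 : Real.sqrt (∑ i, ‖((M *ᵥ x) i : ℂ)‖ ^ 2) = vn (M *ᵥ x) := by
    rw [vn]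
    congr 1
    apply Finset.sum_congr rfl
    intro i _
    rw [Complex.norm_real, Real.norm_eq_abs, sq_abs]
  have e2 : ‖((EuclideanSpace.equiv (Fin n) ℂ).symm z : EuclideanSpace ℂ (Fin n))‖ = vn x := by
    rw [enormC, vn]
    congr 1
    apply Finset.sum_congr rfl
    intro i _
    rw [hzdef, Complex.norm_real, Real.norm_eq_abs, sq_abs]
  rw [e1, e2] at h
  exact h

lemma decay_of_isStable (hn : 0 < n) (M : Matrix (Fin n) (Fin n) ℝ) (hM : IsStable M) :
    ∃ r : ℝ, 0 ≤ r ∧ r < 1 ∧ ∃ C : ℝ, 0 < C ∧ ∀ k, ‖M ^ k‖ ^ 2 ≤ C * r ^ k := by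
  haveI : Nonempty (Fin n) := ⟨⟨0, hn⟩⟩
  haveI : Nontrivial (Matrix (Fin n) (Fin n) ℂ) := by
    refine ⟨0, 1, fun h => ?_⟩
    have := congrFun (congrFun h ⟨0, hn⟩) ⟨0, hn⟩
    simp [Matrix.one_apply] at this
  haveI : CompleteSpace (Matrix (Fin n) (Fin n) ℂ) := FiniteDimensional.complete ℂ _
  set a := M.map (algebraMap ℝ ℂ) with ha
  have hrad : spectralRadius ℂ a < 1 := by
    obtain ⟨μ, hμmem, hμeq⟩ := spectrum.exists_nnnorm_eq_spectralRadius a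
    rw [← hμeq]
    have := hM μ hμmem
    exact_mod_cast this
  obtain ⟨r', h1, h2⟩ := ENNReal.lt_iff_exists_nnreal_btwn.mp hrad
  have htend := spectrum.pow_nnnorm_pow_one_div_tendsto_nhds_spectralRadius a
  have hev : ∀ᶠ k : ℕ in Filter.atTop, (‖a ^ k‖₊ : ENNReal) ^ (1/(k:ℝ)) < (r' : ENNReal) :=
    htend.eventually_lt_const h1
  obtain ⟨N, hN⟩ := Filter.eventually_atTop.mp hev
  have hr'0 : 0 < r' := by
    by_contra h0
    push_neg at h0
    have : r' = 0 := le_antisymm h0 zero_le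
    rw [this] at h1
    simp at h1
  have hbk : ∀ k, N ≤ k → 1 ≤ k → ‖a ^ k‖ ≤ (r' : ℝ) ^ k := by
    intro k hk h1k
    have hlt := hN k hk
    have hkne : (k : ℝ) ≠ 0 := by positivity
    have hpow : ((‖a ^ k‖₊ : ENNReal) ^ (1/(k:ℝ))) ^ (k : ℝ) < (r' : ENNReal) ^ (k:ℝ) := by
      apply ENNReal.rpow_lt_rpow hlt (by positivity)
    rw [← ENNReal.rpow_mul, one_div, inv_mul_cancel₀ hkne, ENNReal.rpow_one,
      ENNReal.rpow_natCast] at hpow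
    have hlt2 : ‖a ^ k‖₊ < r' ^ k := by exact_mod_cast hpow
    have hle := le_of_lt hlt2
    rw [← NNReal.coe_le_coe] at hle
    simpa using hle
  set N' := max N 1 with hN'
  set r : ℝ := (r' : ℝ) ^ 2 with hr
  have hr'1 : (r' : ℝ) < 1 := by exact_mod_cast h2
  have hr'0R : (0:ℝ) < r' := hr'0
  have hr0 : 0 ≤ r := by positivity
  have hrpos : 0 < r := by positivity
  have hr1 : r < 1 := by nlinarith
  refine ⟨r, hr0, hr1, 1 + ∑ j ∈ Finset.range N', ‖M ^ j‖ ^ 2 / r ^ j, by positivity, ?_⟩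
  intro k
  set C := 1 + ∑ j ∈ Finset.range N', ‖M ^ j‖ ^ 2 / r ^ j with hC
  have hsum0 : 0 ≤ ∑ j ∈ Finset.range N', ‖M ^ j‖ ^ 2 / r ^ j :=
    Finset.sum_nonneg fun j _ => by positivity
  have hC1 : 1 ≤ C := by rw [hC]; linarith
  rcases lt_or_ge k N' with hk | hk
  · have hterm : ‖M ^ k‖ ^ 2 / r ^ k ≤ ∑ j ∈ Finset.range N', ‖M ^ j‖ ^ 2 / r ^ j :=
      Finset.single_le_sum (f := fun j => ‖M ^ j‖ ^ 2 / r ^ j) (fun j _ => by positivity)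
        (Finset.mem_range.mpr hk)
    have hrk : 0 < r ^ k := by positivity
    have h3 : ‖M ^ k‖ ^ 2 / r ^ k ≤ C := by rw [hC]; linarith
    exact (div_le_iff₀ hrk).mp h3
  · have hk1 : 1 ≤ k := le_trans (le_max_right N 1) hk
    have hkN : N ≤ k := le_trans (le_max_left N 1) hk
    have h1' : ‖M ^ k‖ ≤ (r' : ℝ) ^ k := by
      have hmk : a ^ k = (M ^ k).map (algebraMap ℝ ℂ) := by
        rw [ha, ← RingHom.mapMatrix_apply, ← RingHom.mapMatrix_apply, map_pow]
      have := real_norm_le_complex (M ^ k)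
      rw [← hmk] at this
      exact this.trans (hbk k hkN hk1)
    have h2' : ‖M ^ k‖ ^ 2 ≤ ((r' : ℝ) ^ k) ^ 2 := by
      have := mul_self_le_mul_self (norm_nonneg _) h1'
      nlinarith [this]
    calc ‖M ^ k‖ ^ 2 ≤ ((r' : ℝ) ^ k) ^ 2 := h2'
      _ = r ^ k := by rw [hr, ← pow_mul, ← pow_mul, mul_comm]
      _ ≤ C * r ^ k := le_mul_of_one_le_left (by positivity) hC1

end DlyapPerturbAux

section DlyapPerturbMain

open scoped Matrix.Norms.L2Operator

variable {n : ℕ}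

lemma quad_lySol {M : Matrix (Fin n) (Fin n) ℝ} {C r : ℝ} (hr0 : 0 ≤ r) (hr1 : r < 1)
    (hd : ∀ k, ‖M ^ k‖ ^ 2 ≤ C * r ^ k) (Q : Matrix (Fin n) (Fin n) ℝ) (x : Fin n → ℝ) :
    quad (lySol M Q) x = ∑' k : ℕ, quad Q (Mᵀ ^ k *ᵥ x) := by
  have hs := summable_lySol hr0 hr1 hd Q
  have h : quad (∑' k : ℕ, M ^ k * Q * (M ^ k)ᵀ) x
      = ∑' k : ℕ, quadL x (M ^ k * Q * (M ^ k)ᵀ) := ContinuousLinearMap.map_tsum (quadL x) hs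
  rw [lySol, h]
  apply tsum_congr
  intro k
  rw [quadL_apply, quad_mul_transpose, Matrix.transpose_pow]

lemma transpose_lySol {M : Matrix (Fin n) (Fin n) ℝ} {C r : ℝ} (hr0 : 0 ≤ r) (hr1 : r < 1)
    (hd : ∀ k, ‖M ^ k‖ ^ 2 ≤ C * r ^ k) (Q : Matrix (Fin n) (Fin n) ℝ) :
    (lySol M Q)ᵀ = lySol M Qᵀ := by
  have hs := summable_lySol hr0 hr1 hd Q
  have h : (∑' k : ℕ, M ^ k * Q * (M ^ k)ᵀ)ᵀ
      = ∑' k : ℕ, transL (M ^ k * Q * (M ^ k)ᵀ) := ContinuousLinearMap.map_tsum transL hs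
  rw [lySol, h, lySol]
  apply tsum_congr
  intro k
  rw [transL_apply, Matrix.transpose_mul, Matrix.transpose_mul, Matrix.transpose_transpose]
  noncomm_ring

lemma quad_sub (X Y : Matrix (Fin n) (Fin n) ℝ) (x : Fin n → ℝ) :
    quad (X - Y) x = quad X x - quad Y x := by
  simp [quad, Matrix.sub_mulVec, dotProduct_sub]

lemma vn_pow_sq_le {M : Matrix (Fin n) (Fin n) ℝ} {C r : ℝ}
    (hd : ∀ k, ‖M ^ k‖ ^ 2 ≤ C * r ^ k) (x : Fin n → ℝ) (k : ℕ) :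
    vn (Mᵀ ^ k *ᵥ x) ^ 2 ≤ C * r ^ k * vn x ^ 2 := by
  have h1 := vn_mulVec_le (Mᵀ ^ k) x
  have h2 : ‖Mᵀ ^ k‖ = ‖M ^ k‖ := by rw [← Matrix.transpose_pow, normT_dlyapAux]
  have h3 := mul_self_le_mul_self (vn_nonneg _) h1
  calc vn (Mᵀ ^ k *ᵥ x) ^ 2 = vn (Mᵀ ^ k *ᵥ x) * vn (Mᵀ ^ k *ᵥ x) := sq (vn _) ▸ by ring
    _ ≤ ‖Mᵀ ^ k‖ * vn x * (‖Mᵀ ^ k‖ * vn x) := h3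
    _ = ‖M ^ k‖ ^ 2 * vn x ^ 2 := by rw [h2]; ring
    _ ≤ C * r ^ k * vn x ^ 2 := mul_le_mul_of_nonneg_right (hd k) (sq_nonneg _)

lemma summable_vn_pow_sq {M : Matrix (Fin n) (Fin n) ℝ} {C r : ℝ} (hr0 : 0 ≤ r) (hr1 : r < 1)
    (hd : ∀ k, ‖M ^ k‖ ^ 2 ≤ C * r ^ k) (x : Fin n → ℝ) :
    Summable (fun k : ℕ => vn (Mᵀ ^ k *ᵥ x) ^ 2) := by
  refine Summable.of_nonneg_of_le (fun k => sq_nonneg _) (fun k => vn_pow_sq_le hd x k) ?_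
  exact ((summable_geometric_of_lt_one hr0 hr1).mul_left C).mul_right (vn x ^ 2)

end DlyapPerturbMain

set_option maxHeartbeats 2000000 in
/-- perturbation bound for the discrete Lyapunov equation. -/
theorem dlyap_perturbation {n : ℕ} (A A' : Matrix (Fin n) (Fin n) ℝ)
    (hA : IsStable A)
    (hpert : spNorm (A' - A) ≤ 1 / (4 * spNorm (dlyap A) * (1 + spNorm A))) :
    IsStable A' ∧
    spNorm (dlyap A' - dlyap A) ≤
      4 * (spNorm (dlyap A)) ^ 2 * (1 + spNorm A) * spNorm (A' - A) := by
  classical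
  rcases Nat.eq_zero_or_pos n with hn | hn
  · subst hn
    haveI hsubR : Subsingleton (Matrix (Fin 0) (Fin 0) ℝ) :=
      ⟨fun a b => Matrix.ext fun i _ => i.elim0⟩
    haveI hsubC : Subsingleton (Matrix (Fin 0) (Fin 0) ℂ) :=
      ⟨fun a b => Matrix.ext fun i _ => i.elim0⟩
    constructor
    · intro μ hμ
      rw [spectrum.mem_iff] at hμ
      exact absurd (isUnit_of_subsingleton _) hμ
    · have hz : dlyap A' - dlyap A = 0 := Subsingleton.elim _ _
      rw [spNorm_eq_norm, spNorm_eq_norm, spNorm_eq_norm, spNorm_eq_norm, hz, norm_zero]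
      positivity
  · obtain ⟨r, hr0, hr1, C, hCpos, hdA⟩ := decay_of_isStable hn A hA
    have hdlyapA : dlyap A = lySol A 1 := tsum_congr (fun k => by rw [mul_one])
    obtain ⟨S, hSdef⟩ : ∃ X, lySol A 1 = X := ⟨_, rfl⟩
    rw [hSdef] at hdlyapA
    have hfixA : S = 1 + A * S * Aᵀ := by
      have h := lySol_fix hr0 hr1 hdA (1 : Matrix (Fin n) (Fin n) ℝ)
      rw [hSdef] at h
      exact h
    have hSsymm : Sᵀ = S := by
      have h := transpose_lySol hr0 hr1 hdA (1 : Matrix (Fin n) (Fin n) ℝ)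
      rw [Matrix.transpose_one, hSdef] at h
      exact h
    have hquadS : ∀ x, quad S x = ∑' k : ℕ, vn (Aᵀ ^ k *ᵥ x) ^ 2 := by
      intro x
      have h := quad_lySol hr0 hr1 hdA (1 : Matrix (Fin n) (Fin n) ℝ) x
      rw [hSdef] at h
      rw [h]
      exact tsum_congr fun k => quad_one _
    have hquadS_lb : ∀ x, vn x ^ 2 ≤ quad S x := by
      intro x
      rw [hquadS x]
      have h0 : vn (Aᵀ ^ 0 *ᵥ x) ^ 2 = vn x ^ 2 := by rw [pow_zero, Matrix.one_mulVec]
      rw [← h0]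
      exact (summable_vn_pow_sq hr0 hr1 hdA x).le_tsum 0 (fun k _ => sq_nonneg _)
    have hquadS_ub : ∀ x, quad S x ≤ ‖S‖ * vn x ^ 2 :=
      fun x => le_trans (le_abs_self _) (abs_quad_le S x)
    have hS1 : (1:ℝ) ≤ ‖S‖ := by
      set x0 : Fin n → ℝ := Pi.single ⟨0, hn⟩ (1:ℝ) with hx0
      have hvx0 : vn x0 ^ 2 = 1 := by
        rw [vn_sq, hx0]
        simp [Pi.single_apply, ite_pow, Finset.sum_ite_eq']
      have h1 := hquadS_lb x0
      have h3 := hquadS_ub x0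
      rw [hvx0] at h1 h3
      linarith
    have hSpos : (0:ℝ) < ‖S‖ := lt_of_lt_of_le one_pos hS1
    have ha0 : (0:ℝ) ≤ ‖A‖ := norm_nonneg _
    have hδ0 : (0:ℝ) ≤ ‖A' - A‖ := norm_nonneg _
    have hpert' : ‖A' - A‖ ≤ 1 / (4 * ‖S‖ * (1 + ‖A‖)) := by
      rw [spNorm_eq_norm, spNorm_eq_norm, spNorm_eq_norm, hdlyapA] at hpert
      exact hpert
    have hden : (0:ℝ) < 4 * ‖S‖ * (1 + ‖A‖) := by nlinarith
    have hpert'' : ‖A' - A‖ * (4 * ‖S‖ * (1 + ‖A‖)) ≤ 1 := (le_div_iff₀ hden).mp hpert'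
    have hsa : (1:ℝ) ≤ ‖S‖ * (1 + ‖A‖) := by nlinarith
    have hδ4 : ‖A' - A‖ ≤ 1/4 := by
      have h1 : 4 * ‖A' - A‖ ≤ 4 * ‖A' - A‖ * (‖S‖ * (1 + ‖A‖)) :=
        le_mul_of_one_le_right (by linarith) hsa
      have h2 : 4 * ‖A' - A‖ * (‖S‖ * (1 + ‖A‖)) = ‖A' - A‖ * (4 * ‖S‖ * (1 + ‖A‖)) := by ring
      linarith
    have hA'n : ‖A'‖ ≤ ‖A‖ + 1/4 := by
      calc ‖A'‖ = ‖A + (A' - A)‖ := by rw [add_sub_cancel]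
        _ ≤ ‖A‖ + ‖A' - A‖ := norm_add_le _ _
        _ ≤ ‖A‖ + 1/4 := by linarith
    obtain ⟨E, hE⟩ : ∃ X, X = A' * S * A'ᵀ - A * S * Aᵀ := ⟨_, rfl⟩
    have hEsym : Eᵀ = E := by
      rw [hE, Matrix.transpose_sub, Matrix.transpose_mul, Matrix.transpose_mul,
        Matrix.transpose_mul, Matrix.transpose_mul, Matrix.transpose_transpose,
        Matrix.transpose_transpose, hSsymm]
      noncomm_ring
    have hEnorm : ‖E‖ ≤ ‖S‖ * ‖A' - A‖ * (2 * ‖A‖ + 1/4) := by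
      have hdecomp : E = (A' - A) * S * A'ᵀ + A * S * (A' - A)ᵀ := by
        rw [hE, Matrix.transpose_sub]
        noncomm_ring
      have h1 : ‖(A' - A) * S * A'ᵀ‖ ≤ ‖A' - A‖ * ‖S‖ * (‖A‖ + 1/4) := by
        calc ‖(A' - A) * S * A'ᵀ‖ ≤ ‖(A' - A) * S‖ * ‖A'ᵀ‖ := norm_mul_le _ _
          _ ≤ ‖A' - A‖ * ‖S‖ * ‖A'ᵀ‖ :=
              mul_le_mul_of_nonneg_right (norm_mul_le _ _) (norm_nonneg _)
          _ ≤ ‖A' - A‖ * ‖S‖ * (‖A‖ + 1/4) := by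
              rw [normT_dlyapAux]
              exact mul_le_mul_of_nonneg_left hA'n (by positivity)
      have h2 : ‖A * S * (A' - A)ᵀ‖ ≤ ‖A‖ * ‖S‖ * ‖A' - A‖ := by
        calc ‖A * S * (A' - A)ᵀ‖ ≤ ‖A * S‖ * ‖(A' - A)ᵀ‖ := norm_mul_le _ _
          _ ≤ ‖A‖ * ‖S‖ * ‖(A' - A)ᵀ‖ :=
              mul_le_mul_of_nonneg_right (norm_mul_le _ _) (norm_nonneg _)
          _ = ‖A‖ * ‖S‖ * ‖A' - A‖ := by rw [normT_dlyapAux]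
      calc ‖E‖ = ‖(A' - A) * S * A'ᵀ + A * S * (A' - A)ᵀ‖ := by rw [← hdecomp]
        _ ≤ ‖(A' - A) * S * A'ᵀ‖ + ‖A * S * (A' - A)ᵀ‖ := norm_add_le _ _
        _ ≤ ‖A' - A‖ * ‖S‖ * (‖A‖ + 1/4) + ‖A‖ * ‖S‖ * ‖A' - A‖ := add_le_add h1 h2
        _ = ‖S‖ * ‖A' - A‖ * (2 * ‖A‖ + 1/4) := by ring
    have hsδ : ‖S‖ * ‖A' - A‖ * (4 * (1 + ‖A‖)) ≤ 1 := by
      have heq : ‖S‖ * ‖A' - A‖ * (4 * (1 + ‖A‖)) = ‖A' - A‖ * (4 * ‖S‖ * (1 + ‖A‖)) := by ring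
      linarith [hpert'']
    have hsδ0 : (0:ℝ) ≤ ‖S‖ * ‖A' - A‖ := mul_nonneg (norm_nonneg _) hδ0
    have hE12 : ‖E‖ ≤ 1/2 := by
      nlinarith [hEnorm, hsδ, hsδ0, mul_nonneg hsδ0 ha0]
    have hρ0 : (0:ℝ) ≤ 1 - 1/(2*‖S‖) := by
      have h1 : 1/(2*‖S‖) ≤ 1/2 := by
        apply div_le_div_of_nonneg_left one_pos.le (by norm_num)
        linarith
      linarith
    have hρ1 : 1 - 1/(2*‖S‖) < 1 := by
      have : (0:ℝ) < 1/(2*‖S‖) := by positivity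
      linarith
    have hASA : A * S * Aᵀ = S - 1 := by
      rw [eq_sub_iff_add_eq]
      conv_rhs => rw [hfixA]
      rw [add_comm]
    have hlyap : ∀ x, quad S (A'ᵀ *ᵥ x) ≤ (1 - 1/(2*‖S‖)) * quad S x := by
      intro x
      have h1 : quad (A' * S * A'ᵀ) x = quad S (A'ᵀ *ᵥ x) := quad_mul_transpose A' S x
      have h2 : A' * S * A'ᵀ = (S - 1) + E := by
        rw [hE, ← hASA]
        noncomm_ring
      have h3 : quad ((S - 1) + E) x = quad S x - vn x ^ 2 + quad E x := by
        rw [quad_add, quad_sub, quad_one]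
      have h4 : quad E x ≤ ‖E‖ * vn x ^ 2 := le_trans (le_abs_self _) (abs_quad_le E x)
      have h5 := hquadS_ub x
      have hq : quad S (A'ᵀ *ᵥ x) = quad S x - vn x ^ 2 + quad E x := by
        rw [← h1, h2, h3]
      have hvn : (0:ℝ) ≤ vn x ^ 2 := sq_nonneg _
      have hEx : quad E x ≤ (1/2) * vn x ^ 2 := by nlinarith [h4, hE12, hvn]
      have hhalf : (1/(2*‖S‖)) * quad S x ≤ (1/2) * vn x ^ 2 := by
        rw [div_mul_eq_mul_div, div_le_iff₀ (by linarith : (0:ℝ) < 2*‖S‖)]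
        nlinarith [h5]
      have hgoal : quad S x - vn x ^ 2 + quad E x
          ≤ quad S x - (1/(2*‖S‖)) * quad S x := by linarith
      rw [hq]
      calc quad S x - vn x ^ 2 + quad E x ≤ quad S x - (1/(2*‖S‖)) * quad S x := hgoal
        _ = (1 - 1/(2*‖S‖)) * quad S x := by ring
    have hdecayA' : ∀ k, ‖A' ^ k‖ ^ 2 ≤ ‖S‖ * (1 - 1/(2*‖S‖)) ^ k := by
      have hiter : ∀ k x, quad S (A'ᵀ ^ k *ᵥ x) ≤ (1 - 1/(2*‖S‖)) ^ k * quad S x := by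
        intro k
        induction k with
        | zero => intro x; simp [pow_zero, Matrix.one_mulVec]
        | succ k ih =>
          intro x
          have h1 : A'ᵀ ^ (k+1) *ᵥ x = A'ᵀ ^ k *ᵥ (A'ᵀ *ᵥ x) := by
            rw [pow_succ, ← Matrix.mulVec_mulVec]
          rw [h1]
          calc quad S (A'ᵀ ^ k *ᵥ (A'ᵀ *ᵥ x))
              ≤ (1 - 1/(2*‖S‖)) ^ k * quad S (A'ᵀ *ᵥ x) := ih _
            _ ≤ (1 - 1/(2*‖S‖)) ^ k * ((1 - 1/(2*‖S‖)) * quad S x) :=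
                mul_le_mul_of_nonneg_left (hlyap x) (pow_nonneg hρ0 k)
            _ = (1 - 1/(2*‖S‖)) ^ (k+1) * quad S x := by rw [pow_succ]; ring
      intro k
      have hnorm : ‖A' ^ k‖ = ‖A'ᵀ ^ k‖ := by rw [← Matrix.transpose_pow, normT_dlyapAux]
      have hsρ : (0:ℝ) ≤ ‖S‖ * (1 - 1/(2*‖S‖)) ^ k :=
        mul_nonneg (norm_nonneg _) (pow_nonneg hρ0 k)
      have hb : ∀ x, vn (A'ᵀ ^ k *ᵥ x) ≤ Real.sqrt (‖S‖ * (1 - 1/(2*‖S‖)) ^ k) * vn x := by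
        intro x
        have h2 := hiter k x
        have h3 := hquadS_lb (A'ᵀ ^ k *ᵥ x)
        have h4 := hquadS_ub x
        have h5 : (0:ℝ) ≤ (1 - 1/(2*‖S‖)) ^ k := pow_nonneg hρ0 k
        have h1 : vn (A'ᵀ ^ k *ᵥ x) ^ 2 ≤ ‖S‖ * (1 - 1/(2*‖S‖)) ^ k * vn x ^ 2 := by
          nlinarith [mul_le_mul_of_nonneg_left h4 h5]
        calc vn (A'ᵀ ^ k *ᵥ x) = Real.sqrt (vn (A'ᵀ ^ k *ᵥ x) ^ 2) :=
              (Real.sqrt_sq (vn_nonneg _)).symm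
          _ ≤ Real.sqrt (‖S‖ * (1 - 1/(2*‖S‖)) ^ k * vn x ^ 2) := Real.sqrt_le_sqrt h1
          _ = Real.sqrt (‖S‖ * (1 - 1/(2*‖S‖)) ^ k) * vn x := by
              rw [Real.sqrt_mul hsρ, Real.sqrt_sq (vn_nonneg _)]
      have hle : ‖A'ᵀ ^ k‖ ≤ Real.sqrt (‖S‖ * (1 - 1/(2*‖S‖)) ^ k) :=
        norm_le_of_vn _ _ (Real.sqrt_nonneg _) hb
      rw [hnorm]
      calc ‖A'ᵀ ^ k‖ ^ 2 ≤ Real.sqrt (‖S‖ * (1 - 1/(2*‖S‖)) ^ k) ^ 2 := by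
            nlinarith [norm_nonneg (A'ᵀ ^ k), hle, Real.sqrt_nonneg (‖S‖ * (1 - 1/(2*‖S‖)) ^ k)]
        _ = ‖S‖ * (1 - 1/(2*‖S‖)) ^ k := Real.sq_sqrt hsρ
    refine ⟨isStable_of_decay A' hρ1 hSpos hdecayA', ?_⟩
    have hdlyapA' : dlyap A' = lySol A' 1 := tsum_congr (fun k => by rw [mul_one])
    obtain ⟨S', hS'def⟩ : ∃ X, lySol A' 1 = X := ⟨_, rfl⟩
    rw [hS'def] at hdlyapA'
    have hfixA' : S' = 1 + A' * S' * A'ᵀ := by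
      have h := lySol_fix hρ0 hρ1 hdecayA' (1 : Matrix (Fin n) (Fin n) ℝ)
      rw [hS'def] at h
      exact h
    obtain ⟨G, hGdef⟩ : ∃ X, lySol A' E = X := ⟨_, rfl⟩
    have hfixG : G = E + A' * G * A'ᵀ := by
      have h := lySol_fix hρ0 hρ1 hdecayA' E
      rw [hGdef] at h
      exact h
    have hkey : S' = S + G := by
      apply lySol_unique hρ0 hρ1 hdecayA' 1 S' (S + G) hfixA'
      have hSA' : A' * S * A'ᵀ = A * S * Aᵀ + E := by rw [hE]; noncomm_ring
      have hexp : A' * (S + G) * A'ᵀ = A' * S * A'ᵀ + A' * G * A'ᵀ := by noncomm_ring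
      calc S + G = (1 + A * S * Aᵀ) + (E + A' * G * A'ᵀ) := by rw [← hfixA, ← hfixG]
        _ = 1 + A' * (S + G) * A'ᵀ := by rw [hexp, hSA']; noncomm_ring
    have hGsym : Gᵀ = G := by
      have h := transpose_lySol hρ0 hρ1 hdecayA' E
      rw [hEsym, hGdef] at h
      exact h
    have hquadS' : ∀ x, quad S' x = ∑' k : ℕ, vn (A'ᵀ ^ k *ᵥ x) ^ 2 := by
      intro x
      have h := quad_lySol hρ0 hρ1 hdecayA' (1 : Matrix (Fin n) (Fin n) ℝ) x
      rw [hS'def] at h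
      rw [h]
      exact tsum_congr fun k => quad_one _
    have hquadG : ∀ x, quad G x = ∑' k : ℕ, quad E (A'ᵀ ^ k *ᵥ x) := by
      intro x
      have h := quad_lySol hρ0 hρ1 hdecayA' E x
      rw [hGdef] at h
      exact h
    have habsG : ∀ x, |quad G x| ≤ ‖E‖ * quad S' x := by
      intro x
      rw [hquadG x, hquadS' x]
      have hsum1 := summable_vn_pow_sq hρ0 hρ1 hdecayA' x (M := A')
      have hbnd : ∀ k : ℕ, |quad E (A'ᵀ ^ k *ᵥ x)| ≤ ‖E‖ * vn (A'ᵀ ^ k *ᵥ x) ^ 2 :=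
        fun k => abs_quad_le E _
      have hsumabs : Summable (fun k : ℕ => |quad E (A'ᵀ ^ k *ᵥ x)|) :=
        Summable.of_nonneg_of_le (fun k => abs_nonneg _) hbnd (hsum1.mul_left ‖E‖)
      have hsum2 : Summable (fun k : ℕ => quad E (A'ᵀ ^ k *ᵥ x)) := by
        apply Summable.of_norm_bounded (hsum1.mul_left ‖E‖)
        intro k
        rw [Real.norm_eq_abs]
        exact hbnd k
      calc |∑' k : ℕ, quad E (A'ᵀ ^ k *ᵥ x)| ≤ ∑' k : ℕ, |quad E (A'ᵀ ^ k *ᵥ x)| := by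
            have h := norm_tsum_le_tsum_norm (f := fun k : ℕ => quad E (A'ᵀ ^ k *ᵥ x)) ?_
            · simpa [Real.norm_eq_abs] using h
            · simpa [Real.norm_eq_abs] using hsumabs
        _ ≤ ∑' k : ℕ, ‖E‖ * vn (A'ᵀ ^ k *ᵥ x) ^ 2 :=
            Summable.tsum_le_tsum hbnd hsumabs (hsum1.mul_left ‖E‖)
        _ = ‖E‖ * ∑' k : ℕ, vn (A'ᵀ ^ k *ᵥ x) ^ 2 := tsum_mul_left
    have hquadS'_ub : ∀ x, quad S' x ≤ ‖S'‖ * vn x ^ 2 :=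
      fun x => le_trans (le_abs_self _) (abs_quad_le S' x)
    have hGnorm : ‖G‖ ≤ ‖E‖ * ‖S'‖ := by
      apply norm_le_of_quad_symm G hGsym _ (mul_nonneg (norm_nonneg _) (norm_nonneg _))
      intro x
      have hS'nn : (0:ℝ) ≤ quad S' x := by
        rw [hquadS' x]
        exact tsum_nonneg fun k => sq_nonneg _
      calc |quad G x| ≤ ‖E‖ * quad S' x := habsG x
        _ ≤ ‖E‖ * (‖S'‖ * vn x ^ 2) :=
            mul_le_mul_of_nonneg_left (hquadS'_ub x) (norm_nonneg _)
        _ = ‖E‖ * ‖S'‖ * vn x ^ 2 := by ring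
    have hS'b : ‖S'‖ ≤ ‖S‖ + ‖G‖ := by
      rw [hkey]
      exact norm_add_le _ _
    have hGfin : ‖G‖ ≤ 2 * ‖E‖ * ‖S‖ := by
      have h1 : ‖G‖ ≤ ‖E‖ * (‖S‖ + ‖G‖) :=
        le_trans hGnorm (mul_le_mul_of_nonneg_left hS'b (norm_nonneg _))
      nlinarith [norm_nonneg G, norm_nonneg E, hE12, h1,
        mul_le_mul_of_nonneg_right hE12 (norm_nonneg G)]
    rw [spNorm_eq_norm, spNorm_eq_norm, spNorm_eq_norm, spNorm_eq_norm, hdlyapA', hdlyapA]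
    have hdiff : S' - S = G := by
      rw [hkey, add_sub_cancel_left]
    rw [hdiff]
    have hfin1 : 2 * ‖E‖ * ‖S‖ ≤ 2 * (‖S‖ * ‖A' - A‖ * (2 * ‖A‖ + 1/4)) * ‖S‖ := by
      nlinarith [hEnorm, hSpos.le]
    have hfin2 : 2 * (‖S‖ * ‖A' - A‖ * (2 * ‖A‖ + 1/4)) * ‖S‖
        ≤ 4 * ‖S‖ ^ 2 * (1 + ‖A‖) * ‖A' - A‖ := by
      nlinarith [mul_nonneg (mul_nonneg (mul_nonneg hSpos.le hSpos.le) hδ0) ha0,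
        mul_nonneg (mul_nonneg hSpos.le hSpos.le) hδ0]
    linarith [hGfin, hfin1, hfin2]
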